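/- Let s > 0, K_x ≥ 0, let P be a real d×d matrix, and let x ∈ B_s^d with x ≠ 0, Px ≠ 0 and d_s(0, x) ≤ K_x. Then ‖P^{⊗_s} x‖ ≤ s·tanh(‖P‖_F · K_x / (2s)). -/

import Mathlib

open Real MeasureTheory

/-- Inverse hyperbolic tangent on `(-1, 1)`. -/
noncomputable def Real.artanhLog (x : ℝ) : ℝ := (1 / 2) * Real.log ((1 + x) / (1 - x))

/-- Matrix-vector multiplication viewed as a map between Euclidean spaces. -/
noncomputable def mulVecE {d d' : ℕ} (P : Matrix (Fin d') (Fin d) ℝ)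
    (x : EuclideanSpace ℝ (Fin d)) : EuclideanSpace ℝ (Fin d') :=
  (EuclideanSpace.equiv (Fin d') ℝ).symm (P.mulVec (EuclideanSpace.equiv (Fin d) ℝ x))

/-- Möbius matrix multiplication `P^{⊗_s} x` on the Poincaré ball of radius `s`.
When `P.mulVec x = 0` this evaluates to `0`, as required. -/
noncomputable def mobiusMat {d d' : ℕ} (s : ℝ) (P : Matrix (Fin d') (Fin d) ℝ)
    (x : EuclideanSpace ℝ (Fin d)) : EuclideanSpace ℝ (Fin d') :=
  (s * Real.tanh ((‖mulVecE P x‖ / ‖x‖) * Real.artanhLog (‖x‖ / s)) / ‖mulVecE P x‖) • mulVecE P x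

/-- Frobenius norm of a real matrix. -/
noncomputable def frobNorm {m n : ℕ} (P : Matrix (Fin m) (Fin n) ℝ) : ℝ :=
  Real.sqrt (∑ i, ∑ j, (P i j) ^ 2)

/-- Lorentz gamma factor `γ_x = 1/√(1 - ‖x‖²/s²)`. -/
noncomputable def lorentzGamma {d : ℕ} (s : ℝ) (x : EuclideanSpace ℝ (Fin d)) : ℝ :=
  1 / Real.sqrt (1 - ‖x‖ ^ 2 / s ^ 2)

/-- Poincaré distance `d_s(x,y) = 2s·arsinh(γ_x γ_y ‖x - y‖ / s)`. -/
noncomputable def dPoin {d : ℕ} (s : ℝ) (x y : EuclideanSpace ℝ (Fin d)) : ℝ :=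
  2 * s * Real.arsinh (lorentzGamma s x * lorentzGamma s y * ‖x - y‖ / s)

/-- Möbius addition on the Poincaré ball of radius `s`. -/
noncomputable def mobiusAdd {d : ℕ} (s : ℝ) (x y : EuclideanSpace ℝ (Fin d)) :
    EuclideanSpace ℝ (Fin d) :=
  ((1 + 2 / s ^ 2 * (inner ℝ x y : ℝ) + 1 / s ^ 2 * ‖y‖ ^ 2) /
      (1 + 2 / s ^ 2 * (inner ℝ x y : ℝ) + 1 / s ^ 4 * ‖x‖ ^ 2 * ‖y‖ ^ 2)) • x +
    ((1 - 1 / s ^ 2 * ‖x‖ ^ 2) /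
      (1 + 2 / s ^ 2 * (inner ℝ x y : ℝ) + 1 / s ^ 4 * ‖x‖ ^ 2 * ‖y‖ ^ 2)) • y

/-- Exponential map at the origin of the Poincaré ball of radius `s`. -/
noncomputable def expZero {d : ℕ} (s : ℝ) (v : EuclideanSpace ℝ (Fin d)) :
    EuclideanSpace ℝ (Fin d) :=
  (s * Real.tanh (‖v‖ / s) / ‖v‖) • v

/-- Logarithmic map at the origin of the Poincaré ball of radius `s`. -/
noncomputable def logZero {d : ℕ} (s : ℝ) (y : EuclideanSpace ℝ (Fin d)) :
    EuclideanSpace ℝ (Fin d) :=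
  (s * Real.artanhLog (‖y‖ / s) / ‖y‖) • y



lemma tanh_eq' (x : ℝ) : Real.tanh x = 1 - 2 / (Real.exp (2*x) + 1) := by
  rw [Real.tanh_eq_sinh_div_cosh, Real.sinh_eq, Real.cosh_eq]
  have h1 := Real.exp_pos x
  have h2 := Real.exp_pos (-x)
  have h3 : Real.exp (2*x) = Real.exp x * Real.exp x := by
    rw [← Real.exp_add]; ring_nf
  have hx : Real.exp x * Real.exp (-x) = 1 := by rw [← Real.exp_add]; simp
  have h4 : Real.exp (2*x) + 1 > 0 := by positivity
  have h3' : Real.exp (x*2) = Real.exp x * Real.exp x := by rw [mul_comm]; exact h3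
  field_simp
  linear_combination (-2 * Real.exp (-x)) * h3' + (-2 * Real.exp x) * hx

lemma tanh_mono' {a b : ℝ} (h : a ≤ b) : Real.tanh a ≤ Real.tanh b := by
  rw [tanh_eq', tanh_eq']
  have ha := Real.exp_pos (2*a)
  have h4 : Real.exp (2*a) + 1 ≤ Real.exp (2*b) + 1 := by
    have := Real.exp_le_exp.2 (by linarith : 2*a ≤ 2*b); linarith
  have h5 : 2/(Real.exp (2*b)+1) ≤ 2/(Real.exp (2*a)+1) :=
    div_le_div_of_nonneg_left (by norm_num) (by positivity) h4
  linarith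

lemma tanh_nonneg' {a : ℝ} (h : 0 ≤ a) : 0 ≤ Real.tanh a := by
  have := tanh_mono' h
  simpa [Real.tanh_zero] using this

lemma mulVecE_apply {d d' : ℕ} (P : Matrix (Fin d') (Fin d) ℝ)
    (x : EuclideanSpace ℝ (Fin d)) (i : Fin d') :
    mulVecE P x i = ∑ j, P i j * x j := rfl

lemma mulVecE_norm_le {d d' : ℕ} (P : Matrix (Fin d') (Fin d) ℝ)
    (x : EuclideanSpace ℝ (Fin d)) : ‖mulVecE P x‖ ≤ frobNorm P * ‖x‖ := by
  have hx2 : ‖x‖ ^ 2 = ∑ j, (x j) ^ 2 := by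
    rw [EuclideanSpace.norm_eq, Real.sq_sqrt (by positivity)]
    simp [sq_abs]
  have hf2 : frobNorm P ^ 2 = ∑ i, ∑ j, (P i j) ^ 2 := by
    rw [frobNorm, Real.sq_sqrt (by positivity)]
  have key : ∑ i, (mulVecE P x i) ^ 2 ≤ (∑ i, ∑ j, (P i j) ^ 2) * ∑ j, (x j) ^ 2 := by
    rw [Finset.sum_mul]
    apply Finset.sum_le_sum
    intro i _
    rw [mulVecE_apply]
    exact Finset.sum_mul_sq_le_sq_mul_sq _ _ _
  have hnorm : ‖mulVecE P x‖ = Real.sqrt (∑ i, (mulVecE P x i) ^ 2) := by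
    rw [EuclideanSpace.norm_eq]
    simp [sq_abs]
  rw [hnorm]
  calc Real.sqrt (∑ i, (mulVecE P x i) ^ 2)
      ≤ Real.sqrt ((∑ i, ∑ j, (P i j) ^ 2) * ∑ j, (x j) ^ 2) := Real.sqrt_le_sqrt key
    _ = Real.sqrt ((frobNorm P * ‖x‖) ^ 2) := by rw [mul_pow, hf2, hx2]
    _ = frobNorm P * ‖x‖ := by
        exact Real.sqrt_sq (mul_nonneg (Real.sqrt_nonneg _) (norm_nonneg _))

/-- Upper bound on the norm of the Möbius matrix multiplication. -/
theorem stmt6 {d : ℕ} (s Kx : ℝ) (hs : 0 < s) (hKx : 0 ≤ Kx)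
    (P : Matrix (Fin d) (Fin d) ℝ) (x : EuclideanSpace ℝ (Fin d))
    (hx0 : x ≠ 0) (hxball : ‖x‖ < s) (hPx : mulVecE P x ≠ 0)
    (hdx : 2 * s * Real.artanhLog (‖x‖ / s) ≤ Kx) :
    ‖mobiusMat s P x‖ ≤ s * Real.tanh (frobNorm P * Kx / (2 * s)) := by
  have hxn : 0 < ‖x‖ := norm_pos_iff.2 hx0
  have hPxn : 0 < ‖mulVecE P x‖ := norm_pos_iff.2 hPx
  have h1 : ‖x‖ / s < 1 := (div_lt_one hs).2 hxball
  have h0 : 0 ≤ ‖x‖ / s := by positivity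
  have hA : 0 ≤ Real.artanhLog (‖x‖ / s) := by
    unfold Real.artanhLog
    have hle : (1 : ℝ) ≤ (1 + ‖x‖/s) / (1 - ‖x‖/s) := by
      rw [le_div_iff₀ (by linarith)]; linarith
    have := Real.log_nonneg hle
    linarith
  set t := (‖mulVecE P x‖ / ‖x‖) * Real.artanhLog (‖x‖ / s) with ht
  have htn : 0 ≤ t := mul_nonneg (by positivity) hA
  have hnorm : ‖mobiusMat s P x‖ = s * Real.tanh t := by
    rw [mobiusMat, norm_smul, Real.norm_eq_abs,
      abs_of_nonneg (div_nonneg (mul_nonneg hs.le (tanh_nonneg' htn)) hPxn.le),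
      div_mul_cancel₀ _ (ne_of_gt hPxn)]
  have hfrob0 : 0 ≤ frobNorm P := Real.sqrt_nonneg _
  have hq : ‖mulVecE P x‖ / ‖x‖ ≤ frobNorm P :=
    (div_le_iff₀ hxn).2 (mulVecE_norm_le P x)
  have hA2 : Real.artanhLog (‖x‖ / s) ≤ Kx / (2 * s) := by
    rw [le_div_iff₀ (by positivity), mul_comm]; exact hdx
  have htle : t ≤ frobNorm P * Kx / (2 * s) := by
    rw [mul_div_assoc]
    exact mul_le_mul hq hA2 hA hfrob0
  rw [hnorm]
  exact mul_le_mul_of_nonneg_left (tanh_mono' htle) hs.le
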